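/- Discrete delayed Gronwall-type lemma: Let h ∈ ℕ with h ≥ 1, Δt > 0, and G, H ≥ 0, and set M = max{G, H}. Let (aₙ)_{n ≥ −h} be a family of nonnegative real numbers such that a_{−h} = a_{−h+1} = … = a₀ and a_{n+1} ≤ (1 + Δt·G)·aₙ + Δt·H·a_{n−h} for all n ≥ 0. Then for every k with 0 ≤ k ≤ h: a_k ≤ [(1 + Δt·G)^k + (1 + Δt·M)^k − 1]·a₀. -/
import Mathlib


open MeasureTheory Finset Filter

theorem stmt_7
    (hdel : ℕ) (hhdel : 1 ≤ hdel)
    (Δt : ℝ) (hΔt : 0 < Δt)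
    (G H M : ℝ) (hG : 0 ≤ G) (hH : 0 ≤ H) (hM : M = max G H)
    (a : ℤ → ℝ)
    (hnonneg : ∀ n : ℤ, -(hdel:ℤ) ≤ n → 0 ≤ a n)
    (hconst : ∀ n : ℤ, -(hdel:ℤ) ≤ n → n ≤ 0 → a n = a 0)
    (hrec : ∀ n : ℤ, 0 ≤ n → a (n+1) ≤ (1 + Δt * G) * a n + Δt * H * a (n - (hdel:ℤ))) :
    ∀ k : ℕ, k ≤ hdel →
      a (k:ℤ) ≤ ((1 + Δt * G) ^ k + (1 + Δt * M) ^ k - 1) * a 0 := by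
  intro k
  induction k with
  | zero => intro _; simp
  | succ k ih =>
    intro hk
    have hk' : k ≤ hdel := Nat.le_of_succ_le hk
    have ha0 : 0 ≤ a 0 := hnonneg 0 (by omega)
    have hak : 0 ≤ a (k:ℤ) := hnonneg _ (by omega)
    have hMG : G ≤ M := hM ▸ le_max_left _ _
    have hMH : H ≤ M := hM ▸ le_max_right _ _
    have h1 : a ((k:ℤ) - hdel) = a 0 := hconst _ (by omega) (by omega)
    have hrec' := hrec (k:ℤ) (by positivity)
    rw [h1] at hrec'
    have ihk := ih hk'
    have h3 : (0:ℝ) ≤ 1 + Δt * G := by nlinarith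
    have h4 : (1:ℝ) ≤ (1 + Δt * M) ^ k := one_le_pow₀ (by nlinarith)
    have hcast : ((k + 1 : ℕ) : ℤ) = (k : ℤ) + 1 := by push_cast; ring
    rw [hcast]
    calc a ((k:ℤ) + 1) ≤ (1 + Δt * G) * a k + Δt * H * a 0 := hrec'
      _ ≤ (1 + Δt * G) * (((1 + Δt * G) ^ k + (1 + Δt * M) ^ k - 1) * a 0)
            + Δt * H * a 0 := by nlinarith
      _ ≤ ((1 + Δt * G) ^ (k+1) + (1 + Δt * M) ^ (k+1) - 1) * a 0 := by
          ring_nf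
          nlinarith [mul_nonneg (mul_nonneg (mul_nonneg hΔt.le (sub_nonneg.2 hMG))
            (sub_nonneg.2 h4)) ha0, mul_nonneg (mul_nonneg hΔt.le (sub_nonneg.2 hMH)) ha0]
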